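/- Let P and P₁ be two polynomials of D[X] such that deg P = d, deg P₁ = d−β ≤ d, v(P) = 0 and v(P₁) = α ≥ 0. Then squo(P, P₁) = squo(P_{|(α+β+1)}, (P₁)_{|(α+β+1)}), where for the truncation P₁ is regarded as a polynomial of formal degree d. -/

import Mathlib

open Polynomial

lemma coeff_sum_CX {R : Type*} [CommRing R] (f : ℕ → R) (n j : ℕ) :
    (∑ i ∈ Finset.range n, C (f i) * X ^ i).coeff j = if j < n then f j else 0 := by
  rw [finset_sum_coeff]
  simp only [coeff_C_mul, coeff_X_pow, mul_ite, mul_one, mul_zero]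
  rw [Finset.sum_ite_eq (Finset.range n) j f]
  simp [Finset.mem_range]

lemma coeff_sum_CX_shift {R : Type*} [CommRing R] (f : ℕ → R) (n ℓ j : ℕ) :
    (∑ i ∈ Finset.range n, C (f i) * X ^ (ℓ + i)).coeff j =
      if ℓ ≤ j ∧ j < ℓ + n then f (j - ℓ) else 0 := by
  rw [finset_sum_coeff]
  simp only [coeff_C_mul, coeff_X_pow, mul_ite, mul_one, mul_zero]
  rcases le_or_gt ℓ j with h | h
  · have : ∀ i ∈ Finset.range n, (if j = ℓ + i then f i else 0) =
        (if (j - ℓ) = i then f i else 0) := by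
      intro i _; exact if_congr (by omega) rfl rfl
    rw [Finset.sum_congr rfl this, Finset.sum_ite_eq (Finset.range n) (j - ℓ) f]
    simp only [Finset.mem_range]
    split_ifs with h1 h2 h2 <;> first | rfl | omega
  · have : ∀ i ∈ Finset.range n, (if j = ℓ + i then f i else 0) = 0 := by
      intro i _; rw [if_neg]; omega
    rw [Finset.sum_congr rfl this, Finset.sum_const_zero, if_neg (by omega)]

/-- Symmetric truncation `P_{|ℓ}` of a polynomial `P` of formal degree `d`:
`P_{|ℓ} = p_0 + ⋯ + p_{ℓ-1}X^{ℓ-1} + p_{d-ℓ+1}X^ℓ + ⋯ + p_d X^{2ℓ-1}` for `1 ≤ ℓ ≤ ⌊d/2⌋`,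
with `P_{|0} = 0` and `P_{|ℓ} = P` for `ℓ > ⌊d/2⌋`. -/
noncomputable def strunc {R : Type*} [CommRing R] (P : R[X]) (d ℓ : ℕ) : R[X] :=
  if ℓ = 0 then 0
  else if 2 * ℓ ≤ d then
    (∑ i ∈ Finset.range ℓ, C (P.coeff i) * X ^ i) +
      ∑ i ∈ Finset.range ℓ, C (P.coeff (d - ℓ + 1 + i)) * X ^ (ℓ + i)
  else P

lemma strunc_coeff_low {R : Type*} [CommRing R] (P : R[X]) {d ℓ j : ℕ}
    (hℓ : ℓ ≠ 0) (h2 : 2 * ℓ ≤ d) (hj : j < ℓ) :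
    (strunc P d ℓ).coeff j = P.coeff j := by
  rw [strunc, if_neg hℓ, if_pos h2, coeff_add, coeff_sum_CX, coeff_sum_CX_shift,
    if_pos hj, if_neg (by omega), add_zero]

lemma strunc_coeff_high {R : Type*} [CommRing R] (P : R[X]) {d ℓ j : ℕ}
    (hℓ : ℓ ≠ 0) (h2 : 2 * ℓ ≤ d) (hP : P.natDegree ≤ d) (hj : ℓ ≤ j) :
    (strunc P d ℓ).coeff j = P.coeff (j + (d + 1 - 2 * ℓ)) := by
  rw [strunc, if_neg hℓ, if_pos h2, coeff_add, coeff_sum_CX, coeff_sum_CX_shift,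
    if_neg (by omega), zero_add]
  rcases lt_or_ge j (ℓ + ℓ) with h | h
  · rw [if_pos ⟨hj, h⟩]
    congr 1
    omega
  · rw [if_neg (by omega), eq_comm]
    apply coeff_eq_zero_of_natDegree_lt
    omega

lemma squo_uniq {B Q Q' R R' : Polynomial ℂ} {β m : ℕ} (hB0 : B.coeff 0 ≠ 0)
    (hBdeg : m ≤ B.natDegree)
    (hR : R.degree < (m : ℕ)) (hR' : R'.degree < (m : ℕ))
    (heq : Q * B + X ^ β * R = Q' * B + X ^ β * R') : Q = Q' := by
  by_contra hne
  have hB : B ≠ 0 := fun h => hB0 (by simp [h])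
  have hS : Q - Q' ≠ 0 := sub_ne_zero.2 hne
  have key : (Q - Q') * B = X ^ β * (R' - R) := by ring_nf; ring_nf at heq; linear_combination heq
  have hT : R' - R ≠ 0 := by
    intro h
    rw [h, mul_zero, mul_eq_zero] at key
    tauto
  have hTdeg : (R' - R).natDegree < m := by
    rw [natDegree_lt_iff_degree_lt hT]
    exact lt_of_le_of_lt (degree_sub_le _ _) (max_lt hR' hR)
  have hdeg : (Q - Q').natDegree + B.natDegree = β + (R' - R).natDegree := by
    have h1 := natDegree_mul hS hB
    have h2 : (X ^ β * (R' - R) : Polynomial ℂ).natDegree = β + (R' - R).natDegree := by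
      rw [natDegree_mul (pow_ne_zero _ X_ne_zero) hT, natDegree_X_pow]
    rw [← h1, key, h2]
  have hSdeg : (Q - Q').natDegree < β := by omega
  have htd : (Q - Q').natTrailingDegree = β + (R' - R).natTrailingDegree := by
    have h1 := natTrailingDegree_mul hS hB
    have hB0' : B.natTrailingDegree = 0 := by
      rw [natTrailingDegree_eq_zero]
      right; exact hB0
    have h2 : (X ^ β * (R' - R) : Polynomial ℂ).natTrailingDegree
        = β + (R' - R).natTrailingDegree := by
      rw [natTrailingDegree_mul (pow_ne_zero _ X_ne_zero) hT, natTrailingDegree_X_pow]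
    rw [← key, h1, hB0', add_zero] at h2
    exact h2
  have := (Q - Q').natTrailingDegree_le_natDegree
  omega

/-- Symmetric truncation does not affect the symmetric quotient:
`squo(P, P₁) = squo(P_{|α+β+1}, (P₁)_{|α+β+1})`, where for the truncation `P₁` is regarded as
a polynomial of formal degree `d`.  Symmetric quotients (over the fraction field of `D`,
inside `ℂ`) are characterized by the defining property of the symmetric division. -/
theorem squo_of_trunc (D : Subring ℂ) (P P₁ : Polynomial D) (d α β : ℕ)
    (hPdeg : P.degree = (d : ℕ)) (hPval : P.coeff 0 ≠ 0)
    (hP₁ : P₁ ≠ 0) (hβd : β ≤ d)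
    (hP₁deg : P₁.degree = ((d - β : ℕ) : WithBot ℕ))
    (hP₁val : P₁.natTrailingDegree = α) :
    ∀ Q R Q' R' : Polynomial ℂ,
      Q.degree = ((α + β : ℕ) : WithBot ℕ) →
      R.degree < ((d - (α + β) : ℕ) : WithBot ℕ) →
      P.map D.subtype = Q * (P₁.map D.subtype /ₘ X ^ α) + X ^ β * R →
      Q'.degree = ((α + β : ℕ) : WithBot ℕ) →
      R'.degree < (((strunc P d (α + β + 1)).natDegree - (α + β) : ℕ) : WithBot ℕ) →
      (strunc P d (α + β + 1)).map D.subtype =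
        Q' * ((strunc P₁ d (α + β + 1)).map D.subtype /ₘ X ^ α) + X ^ β * R' →
      Q = Q' := by
  intro Q R Q' R' hQdeg hRdeg hPeq hQ'deg hR'deg hP'eq
  set ℓ : ℕ := α + β + 1 with hℓdef
  have hℓ0 : ℓ ≠ 0 := Nat.succ_ne_zero _
  -- basic degree facts
  have hPd : P.natDegree = d := natDegree_eq_of_degree_eq_some hPdeg
  have hP₁d : P₁.natDegree = d - β := natDegree_eq_of_degree_eq_some hP₁deg
  have hαβ : α + β ≤ d := by
    have := hP₁val ▸ P₁.natTrailingDegree_le_natDegree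
    omega
  have hPne : P ≠ 0 := fun h => by simp [h] at hPdeg
  -- coefficients of mapped polynomials
  have hmapne : ∀ (T : Polynomial D) (j : ℕ), T.coeff j ≠ 0 → (T.map D.subtype).coeff j ≠ 0 := by
    intro T j h
    rw [coeff_map]
    exact fun hh => h (Subtype.coe_injective (by simpa using hh))
  have hmapzero : ∀ (T : Polynomial D) (j : ℕ), T.coeff j = 0 → (T.map D.subtype).coeff j = 0 := by
    intro T j h; rw [coeff_map, h, map_zero]
  -- leading and trailing coefficients
  have hPlead : P.coeff d ≠ 0 := by
    rw [← hPd]; exact fun h => hPne (leadingCoeff_eq_zero.1 h)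
  have hP₁lead : P₁.coeff (d - β) ≠ 0 := by
    rw [← hP₁d]; exact fun h => hP₁ (leadingCoeff_eq_zero.1 h)
  have hP₁trail : P₁.coeff α ≠ 0 := by
    rw [← hP₁val]; exact fun h => hP₁ (coeff_natTrailingDegree_eq_zero.1 h)
  have hP₁low : ∀ j < α, P₁.coeff j = 0 := by
    intro j hj
    exact coeff_eq_zero_of_lt_natTrailingDegree (hP₁val ▸ hj)
  rcases le_or_gt (2 * ℓ) d with hc | hc
  · -- truncation case
    set s : ℕ := d + 1 - 2 * ℓ with hsdef
    set f : Polynomial ℂ := P.map D.subtype with hfdef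
    set f₁ : Polynomial ℂ := P₁.map D.subtype with hf₁def
    set f' : Polynomial ℂ := (strunc P d ℓ).map D.subtype with hf'def
    set f₁' : Polynomial ℂ := (strunc P₁ d ℓ).map D.subtype with hf₁'def
    have hf'low : ∀ j < ℓ, f'.coeff j = f.coeff j := by
      intro j hj
      rw [hf'def, hfdef, coeff_map, coeff_map, strunc_coeff_low _ hℓ0 hc hj]
    have hf'high : ∀ j, ℓ ≤ j → f'.coeff j = f.coeff (j + s) := by
      intro j hj
      rw [hf'def, hfdef, coeff_map, coeff_map, strunc_coeff_high _ hℓ0 hc (le_of_eq hPd) hj]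
    have hf₁'low : ∀ j < ℓ, f₁'.coeff j = f₁.coeff j := by
      intro j hj
      rw [hf₁'def, hf₁def, coeff_map, coeff_map, strunc_coeff_low _ hℓ0 hc hj]
    have hf₁'high : ∀ j, ℓ ≤ j → f₁'.coeff j = f₁.coeff (j + s) := by
      intro j hj
      rw [hf₁'def, hf₁def, coeff_map, coeff_map,
        strunc_coeff_high _ hℓ0 hc (by omega : P₁.natDegree ≤ d) hj]
    -- exact division by X^α
    have hdvd₁ : (X : Polynomial ℂ) ^ α ∣ f₁ := by
      rw [X_pow_dvd_iff]
      intro j hj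
      exact hmapzero _ _ (hP₁low j hj)
    have hdvd₁' : (X : Polynomial ℂ) ^ α ∣ f₁' := by
      rw [X_pow_dvd_iff]
      intro j hj
      rw [hf₁'low j (by omega)]
      exact hmapzero _ _ (hP₁low j hj)
    set B : Polynomial ℂ := f₁ /ₘ X ^ α with hBdef
    set B'' : Polynomial ℂ := f₁' /ₘ X ^ α with hB''def
    have hB : X ^ α * B = f₁ := by
      conv_rhs => rw [← modByMonic_add_div f₁ (X ^ α)]
      rw [(modByMonic_eq_zero_iff_dvd (monic_X_pow α)).2 hdvd₁, zero_add]
    have hB'' : X ^ α * B'' = f₁' := by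
      conv_rhs => rw [← modByMonic_add_div f₁' (X ^ α)]
      rw [(modByMonic_eq_zero_iff_dvd (monic_X_pow α)).2 hdvd₁', zero_add]
    have hBc : ∀ k, B.coeff k = f₁.coeff (k + α) := by
      intro k; rw [← hB, coeff_X_pow_mul]
    have hB''c : ∀ k, B''.coeff k = f₁'.coeff (k + α) := by
      intro k; rw [← hB'', coeff_X_pow_mul]
    have hQnd : Q.natDegree = α + β := natDegree_eq_of_degree_eq_some hQdeg
    have hQne : Q ≠ 0 := by rw [← zero_le_degree_iff, hQdeg]; exact_mod_cast Nat.zero_le _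
    -- key coefficient identities
    have key1 : ∀ j < β, (Q * B'').coeff j = (Q * B).coeff j := by
      intro j hj
      rw [coeff_mul, coeff_mul]
      apply Finset.sum_congr rfl
      intro x hx
      rw [Finset.HasAntidiagonal.mem_antidiagonal] at hx
      congr 1
      rw [hB''c, hBc, hf₁'low (x.2 + α) (by omega)]
    have key2 : ∀ j, β + ℓ ≤ j → (Q * B'').coeff j = (Q * B).coeff (j + s) := by
      intro j hj
      rw [coeff_mul, coeff_mul, Finset.Nat.sum_antidiagonal_eq_sum_range_succ_mk,
        Finset.Nat.sum_antidiagonal_eq_sum_range_succ_mk]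
      have hsub : Finset.range (j + 1) ⊆ Finset.range (j + s + 1) :=
        Finset.range_subset_range.2 (by omega)
      have hzero : ∀ a ∈ Finset.range (j + s + 1), a ∉ Finset.range (j + 1) →
          Q.coeff a * B.coeff (j + s - a) = 0 := by
        intro a _ hna
        rw [Finset.mem_range] at hna
        rw [coeff_eq_zero_of_natDegree_lt (by omega : Q.natDegree < a), zero_mul]
      rw [show (j + s).succ = j + s + 1 from rfl, show j.succ = j + 1 from rfl,
        ← Finset.sum_subset hsub hzero]
      apply Finset.sum_congr rfl
      intro a ha
      rw [Finset.mem_range] at ha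
      rcases le_or_gt a (α + β) with haQ | haQ
      · congr 1
        rw [hB''c, hBc, hf₁'high (j - a + α) (by omega)]
        congr 1
        omega
      · rw [coeff_eq_zero_of_natDegree_lt (by omega : Q.natDegree < a), zero_mul, zero_mul]
    have hfQB : f - Q * B = X ^ β * R := by rw [hPeq]; ring
    set g : Polynomial ℂ := f' - Q * B'' with hgdef
    have hglow : ∀ j < β, g.coeff j = 0 := by
      intro j hj
      rw [hgdef, coeff_sub, hf'low j (by omega), key1 j hj, ← coeff_sub, hfQB,
        coeff_X_pow_mul', if_neg (by omega)]
    have hghigh : ∀ j, β + ℓ ≤ j → g.coeff j = 0 := by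
      intro j hj
      rw [hgdef, coeff_sub, hf'high j (by omega), key2 j hj, ← coeff_sub, hfQB,
        coeff_X_pow_mul', if_pos (by omega : β ≤ j + s)]
      apply coeff_eq_zero_of_degree_lt
      apply lt_of_lt_of_le hRdeg
      exact_mod_cast Nat.cast_le.2 (by omega : d - (α + β) ≤ j + s - β)
    have hgdvd : (X : Polynomial ℂ) ^ β ∣ g := X_pow_dvd_iff.2 hglow
    obtain ⟨R'', hgR⟩ := hgdvd
    have hfeq' : f' = Q * B'' + X ^ β * R'' := by
      rw [← hgR, hgdef]; ring
    have hgdeg : g.degree < ((β + ℓ : ℕ) : WithBot ℕ) :=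
      (degree_lt_iff_coeff_zero g (β + ℓ)).2 (fun m hm => hghigh m (by exact_mod_cast hm))
    have hR''deg : R''.degree < ((ℓ : ℕ) : WithBot ℕ) := by
      rcases eq_or_ne R'' 0 with h0 | h0
      · rw [h0, degree_zero]
        exact WithBot.bot_lt_coe _
      · rw [hgR, degree_mul, degree_X_pow, degree_eq_natDegree h0] at hgdeg
        rw [degree_eq_natDegree h0]
        have : ((β + R''.natDegree : ℕ) : WithBot ℕ) < ((β + ℓ : ℕ) : WithBot ℕ) := by
          push_cast
          exact_mod_cast hgdeg
        rw [Nat.cast_lt] at this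
        exact_mod_cast (by omega : R''.natDegree < ℓ)
    -- natDegree of strunc P
    have hN : (strunc P d ℓ).natDegree = 2 * ℓ - 1 := by
      apply le_antisymm
      · rw [natDegree_le_iff_coeff_eq_zero]
        intro m hm
        rw [strunc_coeff_high P hℓ0 hc (le_of_eq hPd) (by omega)]
        exact coeff_eq_zero_of_natDegree_lt (by omega)
      · apply le_natDegree_of_ne_zero
        rw [strunc_coeff_high P hℓ0 hc (le_of_eq hPd) (by omega),
          show 2 * ℓ - 1 + (d + 1 - 2 * ℓ) = d by omega]
        exact hPlead
    rw [hN, show 2 * ℓ - 1 - (α + β) = ℓ by omega] at hR'deg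
    -- trailing and degree facts for B''
    have hB''0 : B''.coeff 0 ≠ 0 := by
      rw [hB''c, zero_add, hf₁'low α (by omega)]
      exact hmapne _ _ hP₁trail
    have hB''deg : ℓ ≤ B''.natDegree := by
      apply le_natDegree_of_ne_zero
      rw [hB''c, hf₁'high (ℓ + α) (by omega), show ℓ + α + s = d - β by omega]
      exact hmapne _ _ hP₁lead
    exact squo_uniq hB''0 hB''deg hR''deg hR'deg (hfeq'.symm.trans hP'eq)
  · -- no-truncation case
    have hsP : strunc P d ℓ = P := by rw [strunc, if_neg hℓ0, if_neg (by omega)]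
    have hsP₁ : strunc P₁ d ℓ = P₁ := by rw [strunc, if_neg hℓ0, if_neg (by omega)]
    rw [hsP, hPd] at hR'deg
    rw [hsP, hsP₁] at hP'eq
    set B : Polynomial ℂ := P₁.map D.subtype /ₘ X ^ α with hBdef
    have hdvd₁ : (X : Polynomial ℂ) ^ α ∣ P₁.map D.subtype := by
      rw [X_pow_dvd_iff]
      intro j hj
      exact hmapzero _ _ (hP₁low j hj)
    have hB : X ^ α * B = P₁.map D.subtype := by
      conv_rhs => rw [← modByMonic_add_div (P₁.map D.subtype) (X ^ α)]
      rw [(modByMonic_eq_zero_iff_dvd (monic_X_pow α)).2 hdvd₁, zero_add]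
    have hBc : ∀ k, B.coeff k = (P₁.map D.subtype).coeff (k + α) := by
      intro k; rw [← hB, coeff_X_pow_mul]
    have hB0 : B.coeff 0 ≠ 0 := by
      rw [hBc, zero_add]
      exact hmapne _ _ hP₁trail
    have hBdeg : d - (α + β) ≤ B.natDegree := by
      apply le_natDegree_of_ne_zero
      rw [hBc, show d - (α + β) + α = d - β by omega]
      exact hmapne _ _ hP₁lead
    exact squo_uniq hB0 hBdeg hRdeg hR'deg (hPeq.symm.trans hP'eq)
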